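/- arXiv:1709.01543 — 5 statements merged into one kernel-verified Lean document; each statement's English description precedes it below -/
import Mathlib

section
/- (Theorem 1, algebraic equilibrium version.) Let I be a finite nonempty index set (controllable generators) equipped with a connected undirected communication graph with neighbor sets N_i, let each f_i : ℝ → ℝ be differentiable and strictly convex, let D_i ≥ 0 (i in the set G of all generators, with I ⊆ G), D̃_i ≥ 0 (i ∈ N, the set of all buses) with Σ_{i∈N} D̃_i > 0, let z_{ij} = −z_{ji} for communication-adjacent pairs, and let ω₀ ∈ ℝ be the common equilibrium frequency deviation. Suppose the equilibrium conditions hold: (i) ω₀ + f_i'(P_i) + μ_i − γ_i⁻ + γ_i⁺ = 0 for all i ∈ I; (ii) P_i − p̂_i − Σ_{j∈N_i}(μ_i − μ_j) − Σ_{j∈N_i} z_{ij} = 0 for all i ∈ I; (iii) μ_i = μ_j for every communication edge (i,j); (iv) γ_i⁻ ≥ 0, γ_i⁺ ≥ 0, P̲_i ≤ P_i ≤ P̄_i, γ_i⁻(P̲_i − P_i) = 0 and γ_i⁺(P_i − P̄_i) = 0 for all i ∈ I; (v) the summed network power balance Σ_{i∈G} P_i − ω₀·(Σ_{i∈G} D_i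 + Σ_{i∈N} D̃_i) − Σ_{i∈N} p_i = 0; (vi) Σ_{i∈I} p̂_i = Σ_{i∈N} p_i − Σ_{i∈G∖I} P_i. Then: (1) P̲_i ≤ P_i ≤ P̄_i for all i ∈ I; (2) ω₀ = 0; (3) all μ_i equal a common value μ₀ and f_i'(P_i) − γ_i⁻ + γ_i⁺ = f_j'(P_j) − γ_j⁻ + γ_j⁺ for all i, j ∈ I; (4) (P_i)_{i∈I} is the unique optimal solution of the SFC problem with c = Σ_{i∈N} p_i − Σ_{i∈G∖I} P_i. -/
/-- Gradient inequality for a differentiable convex function on ℝ. -/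
lemma grad_ineq_aux {f : ℝ → ℝ} (hc : ConvexOn ℝ Set.univ f)
    (hd : Differentiable ℝ f) (x y : ℝ) :
    f x + deriv f x * (y - x) ≤ f y := by
  rcases lt_trichotomy x y with h | h | h
  · have h1 := hc.deriv_le_slope (Set.mem_univ x) (Set.mem_univ y) h (hd x)
    rw [slope_def_field] at h1
    have := (le_div_iff₀ (by linarith : (0:ℝ) < y - x)).mp h1
    linarith
  · simp [h]
  · have h1 := hc.slope_le_deriv (Set.mem_univ y) (Set.mem_univ x) h (hd x)
    rw [slope_def_field] at h1
    have := (div_le_iff₀ (by linarith : (0:ℝ) < x - y)).mp h1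
    linarith

open Finset in
/-- **Theorem 1 (algebraic equilibrium version).**
`CG` are the controllable generators (with a connected communication graph `Gc`),
`UG` the uncontrollable generators and `LB` the pure load buses; the set of all
generators is `CG ⊕ UG` and the set of all buses is `CG ⊕ UG ⊕ LB`.
At any equilibrium of the closed-loop system:
(1) the controllable generations satisfy their capacity limits;
(2) the common frequency deviation `ω₀` is zero;
(3) all local multiplier estimates `μ i` agree, and marginal generation costs
    are identical across controllable generators;
(4) the vector of controllable generations is the unique optimal solution of the
    SFC problem with total demand `c = ∑ p - ∑_{UG} P`. -/
theorem equilibrium_optimal {CG UG LB : Type*}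
    [Fintype CG] [Fintype UG] [Fintype LB] [Nonempty CG]
    (Gc : SimpleGraph CG) [DecidableRel Gc.Adj] (hconn : Gc.Connected)
    (f : CG → ℝ → ℝ) (hdiff : ∀ i, Differentiable ℝ (f i))
    (hconv : ∀ i, StrictConvexOn ℝ Set.univ (f i))
    (Plo Phi : CG → ℝ) (hle : ∀ i, Plo i ≤ Phi i)
    (D : CG ⊕ UG → ℝ) (hD : ∀ i, 0 ≤ D i)
    (Dt : (CG ⊕ UG) ⊕ LB → ℝ) (hDt : ∀ i, 0 ≤ Dt i) (hDtpos : 0 < ∑ i, Dt i)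
    (z : CG → CG → ℝ) (hz : ∀ i j, Gc.Adj i j → z i j = - z j i)
    (ω₀ : ℝ) (P : CG ⊕ UG → ℝ) (phat μ γm γp : CG → ℝ)
    (p : (CG ⊕ UG) ⊕ LB → ℝ)
    (h1 : ∀ i, ω₀ + deriv (f i) (P (Sum.inl i)) + μ i - γm i + γp i = 0)
    (h2 : ∀ i, P (Sum.inl i) - phat i
          - (∑ j ∈ univ.filter (fun j => Gc.Adj i j), (μ i - μ j))
          - (∑ j ∈ univ.filter (fun j => Gc.Adj i j), z i j) = 0)
    (h3 : ∀ i j, Gc.Adj i j → μ i = μ j)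
    (h4 : ∀ i, 0 ≤ γm i ∧ 0 ≤ γp i ∧ Plo i ≤ P (Sum.inl i) ∧ P (Sum.inl i) ≤ Phi i ∧
          γm i * (Plo i - P (Sum.inl i)) = 0 ∧ γp i * (P (Sum.inl i) - Phi i) = 0)
    (h5 : (∑ i, P i) - ω₀ * ((∑ i, D i) + (∑ i, Dt i)) - (∑ i, p i) = 0)
    (h6 : ∑ i, phat i = (∑ i, p i) - (∑ k, P (Sum.inr k))) :
    (∀ i, Plo i ≤ P (Sum.inl i) ∧ P (Sum.inl i) ≤ Phi i) ∧
    ω₀ = 0 ∧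
    (∃ μ₀ : ℝ, ∀ i, μ i = μ₀) ∧
    (∀ i j, deriv (f i) (P (Sum.inl i)) - γm i + γp i
          = deriv (f j) (P (Sum.inl j)) - γm j + γp j) ∧
    ((((∑ i, P (Sum.inl i)) = (∑ i, p i) - (∑ k, P (Sum.inr k))) ∧
        (∀ i, Plo i ≤ P (Sum.inl i) ∧ P (Sum.inl i) ≤ Phi i)) ∧
      (∀ Q : CG → ℝ,
        (((∑ i, Q i) = (∑ i, p i) - (∑ k, P (Sum.inr k))) ∧
          (∀ i, Plo i ≤ Q i ∧ Q i ≤ Phi i)) →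
        ∑ i, f i (P (Sum.inl i)) ≤ ∑ i, f i (Q i)) ∧
      (∀ Q : CG → ℝ,
        ((((∑ i, Q i) = (∑ i, p i) - (∑ k, P (Sum.inr k))) ∧
            (∀ i, Plo i ≤ Q i ∧ Q i ≤ Phi i)) ∧
          (∀ R : CG → ℝ,
            (((∑ i, R i) = (∑ i, p i) - (∑ k, P (Sum.inr k))) ∧
              (∀ i, Plo i ≤ R i ∧ R i ≤ Phi i)) →
            ∑ i, f i (Q i) ≤ ∑ i, f i (R i))) →
        Q = fun i => P (Sum.inl i))) := by
  classical
  -- μ is constant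
  have hmu : ∀ i j, μ i = μ j := by
    intro i j
    obtain ⟨w⟩ := hconn.preconnected i j
    induction w with
    | nil => rfl
    | cons h _ ih => exact (h3 _ _ h).trans ih
  set μ₀ := μ (Classical.arbitrary CG) with hμ₀
  have hmu0 : ∀ i, μ i = μ₀ := fun i => hmu i _
  -- the antisymmetric z-sum vanishes
  have hzsum : (∑ i, ∑ j ∈ univ.filter (fun j => Gc.Adj i j), z i j) = 0 := by
    have hkey : (∑ i, ∑ j ∈ univ.filter (fun j => Gc.Adj i j), z i j)
        = ∑ j, ∑ i ∈ univ.filter (fun i => Gc.Adj j i), z i j := by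
      apply Finset.sum_comm'
      intro x y
      simp only [Finset.mem_univ, Finset.mem_filter, true_and, and_true]
      exact ⟨fun h => Gc.adj_symm h, fun h => Gc.adj_symm h⟩
    have hneg : (∑ j, ∑ i ∈ univ.filter (fun i => Gc.Adj j i), z i j)
        = -(∑ j, ∑ i ∈ univ.filter (fun i => Gc.Adj j i), z j i) := by
      rw [← Finset.sum_neg_distrib]
      refine Finset.sum_congr rfl fun j _ => ?_
      rw [← Finset.sum_neg_distrib]
      refine Finset.sum_congr rfl fun i hi => ?_
      simp only [Finset.mem_filter] at hi
      rw [hz j i hi.2]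
      ring
    linarith [hkey, hneg]
  -- μ-difference sums vanish
  have hmusum : ∀ i, (∑ j ∈ univ.filter (fun j => Gc.Adj i j), (μ i - μ j)) = 0 := by
    intro i
    refine Finset.sum_eq_zero fun j hj => ?_
    simp only [Finset.mem_filter] at hj
    rw [h3 i j hj.2]; ring
  -- sum of controllable generation equals c
  have hsum2 : (∑ i, (P (Sum.inl i) - phat i
      - (∑ j ∈ univ.filter (fun j => Gc.Adj i j), (μ i - μ j))
      - (∑ j ∈ univ.filter (fun j => Gc.Adj i j), z i j))) = 0 :=
    Finset.sum_eq_zero fun i _ => h2 i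
  have hA : (∑ i, (∑ j ∈ univ.filter (fun j => Gc.Adj i j), (μ i - μ j))) = 0 :=
    Finset.sum_eq_zero fun i _ => hmusum i
  have hPsum : (∑ i, P (Sum.inl i)) = ∑ i, phat i := by
    have := hsum2
    rw [Finset.sum_sub_distrib, Finset.sum_sub_distrib, Finset.sum_sub_distrib,
      hA, hzsum] at this
    linarith
  have hc : (∑ i, P (Sum.inl i)) = (∑ i, p i) - (∑ k, P (Sum.inr k)) := by
    rw [hPsum, h6]
  -- ω₀ = 0
  have hPsplit : (∑ i, P i) = (∑ i, P (Sum.inl i)) + (∑ k, P (Sum.inr k)) :=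
    Fintype.sum_sum_type P
  have hDsum : 0 ≤ ∑ i, D i := Finset.sum_nonneg fun i _ => hD i
  have hω : ω₀ = 0 := by
    have hzero : ω₀ * ((∑ i, D i) + (∑ i, Dt i)) = 0 := by
      rw [hPsplit, hc] at h5; linarith
    have hpos : 0 < (∑ i, D i) + (∑ i, Dt i) := by linarith
    exact (mul_eq_zero.mp hzero).resolve_right (ne_of_gt hpos)
  -- marginal cost characterization
  have hderiv : ∀ i, deriv (f i) (P (Sum.inl i)) = -μ₀ + γm i - γp i := by
    intro i
    have := h1 i
    have := hmu0 i
    linarith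
  have hmarg : ∀ i j, deriv (f i) (P (Sum.inl i)) - γm i + γp i
      = deriv (f j) (P (Sum.inl j)) - γm j + γp j := by
    intro i j
    rw [hderiv i, hderiv j]; ring
  have hbounds : ∀ i, Plo i ≤ P (Sum.inl i) ∧ P (Sum.inl i) ≤ Phi i :=
    fun i => ⟨(h4 i).2.2.1, (h4 i).2.2.2.1⟩
  -- optimality
  have hopt : ∀ Q : CG → ℝ,
      (((∑ i, Q i) = (∑ i, p i) - (∑ k, P (Sum.inr k))) ∧
        (∀ i, Plo i ≤ Q i ∧ Q i ≤ Phi i)) →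
      ∑ i, f i (P (Sum.inl i)) ≤ ∑ i, f i (Q i) := by
    intro Q hQ
    have hgrad : ∀ i, f i (P (Sum.inl i))
        + deriv (f i) (P (Sum.inl i)) * (Q i - P (Sum.inl i)) ≤ f i (Q i) :=
      fun i => grad_ineq_aux (hconv i).convexOn (hdiff i) _ _
    have hnn : ∀ i, 0 ≤ γm i * (Q i - P (Sum.inl i)) - γp i * (Q i - P (Sum.inl i)) := by
      intro i
      obtain ⟨hm, hp, hlo, hhi, hcm, hcp⟩ := h4 i
      obtain ⟨hQlo, hQhi⟩ := hQ.2 i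
      have hm' : 0 ≤ γm i * (Q i - P (Sum.inl i)) := by
        rcases eq_or_lt_of_le hm with h | h
        · rw [← h]; simp
        · have := (mul_eq_zero.mp hcm).resolve_left h.ne'
          have hPe : P (Sum.inl i) = Plo i := by linarith
          exact mul_nonneg hm (by linarith)
      have hp' : γp i * (Q i - P (Sum.inl i)) ≤ 0 := by
        rcases eq_or_lt_of_le hp with h | h
        · rw [← h]; simp
        · have := (mul_eq_zero.mp hcp).resolve_left h.ne'
          have hPe : P (Sum.inl i) = Phi i := by linarith
          exact mul_nonpos_of_nonneg_of_nonpos hp (by linarith)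
      linarith
    have hsum : ∑ i, (f i (P (Sum.inl i))
        + deriv (f i) (P (Sum.inl i)) * (Q i - P (Sum.inl i))) ≤ ∑ i, f i (Q i) :=
      Finset.sum_le_sum fun i _ => hgrad i
    have hsplit : (∑ i, deriv (f i) (P (Sum.inl i)) * (Q i - P (Sum.inl i)))
        = -μ₀ * ((∑ i, Q i) - (∑ i, P (Sum.inl i)))
          + ∑ i, (γm i * (Q i - P (Sum.inl i)) - γp i * (Q i - P (Sum.inl i))) := by
      calc (∑ i, deriv (f i) (P (Sum.inl i)) * (Q i - P (Sum.inl i)))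
          = ∑ i, (-μ₀ * (Q i - P (Sum.inl i))
              + (γm i * (Q i - P (Sum.inl i)) - γp i * (Q i - P (Sum.inl i)))) := by
            refine Finset.sum_congr rfl fun i _ => ?_
            rw [hderiv i]; ring
        _ = (∑ i, -μ₀ * (Q i - P (Sum.inl i)))
              + ∑ i, (γm i * (Q i - P (Sum.inl i)) - γp i * (Q i - P (Sum.inl i))) :=
            Finset.sum_add_distrib
        _ = -μ₀ * ((∑ i, Q i) - (∑ i, P (Sum.inl i)))
              + ∑ i, (γm i * (Q i - P (Sum.inl i)) - γp i * (Q i - P (Sum.inl i))) := by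
            rw [← Finset.mul_sum, Finset.sum_sub_distrib]
    have hQc : (∑ i, Q i) - (∑ i, P (Sum.inl i)) = 0 := by
      rw [hQ.1, hc]; ring
    have hnnsum : 0 ≤ ∑ i, (γm i * (Q i - P (Sum.inl i)) - γp i * (Q i - P (Sum.inl i))) :=
      Finset.sum_nonneg fun i _ => hnn i
    rw [Finset.sum_add_distrib] at hsum
    rw [hQc, mul_zero, zero_add] at hsplit
    linarith
  refine ⟨hbounds, hω, ⟨μ₀, hmu0⟩, hmarg, ⟨hc, hbounds⟩, hopt, ?_⟩
  -- uniqueness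
  intro Q ⟨hQfeas, hQopt⟩
  by_contra hne
  obtain ⟨i0, hi0⟩ := Function.ne_iff.mp hne
  set M : CG → ℝ := fun i => (1/2 : ℝ) * Q i + (1/2 : ℝ) * P (Sum.inl i) with hM
  have hMfeas : ((∑ i, M i) = (∑ i, p i) - (∑ k, P (Sum.inr k))) ∧
      (∀ i, Plo i ≤ M i ∧ M i ≤ Phi i) := by
    constructor
    · simp only [hM, Finset.sum_add_distrib, ← Finset.mul_sum]
      rw [hQfeas.1, hc]; ring
    · intro i
      obtain ⟨ha, hb⟩ := hQfeas.2 i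
      obtain ⟨hcl, hcu⟩ := hbounds i
      constructor <;> simp only [hM] <;> linarith
  have hEq : (∑ i, f i (Q i)) = ∑ i, f i (P (Sum.inl i)) :=
    le_antisymm (hQopt (fun i => P (Sum.inl i)) ⟨hc, hbounds⟩) (hopt Q hQfeas)
  have hlt : (∑ i, f i (M i))
      < ∑ i, ((1/2 : ℝ) * f i (Q i) + (1/2 : ℝ) * f i (P (Sum.inl i))) := by
    refine Finset.sum_lt_sum (fun i _ => ?_) ⟨i0, Finset.mem_univ i0, ?_⟩
    · have := (hconv i).convexOn.2 (Set.mem_univ (Q i)) (Set.mem_univ (P (Sum.inl i)))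
        (by norm_num : (0:ℝ) ≤ 1/2) (by norm_num : (0:ℝ) ≤ 1/2) (by norm_num)
      simpa [hM, smul_eq_mul] using this
    · have := (hconv i0).2 (Set.mem_univ (Q i0)) (Set.mem_univ (P (Sum.inl i0))) hi0
        (by norm_num : (0:ℝ) < 1/2) (by norm_num : (0:ℝ) < 1/2) (by norm_num)
      simpa [hM, smul_eq_mul] using this
  have hhalf : (∑ i, ((1/2 : ℝ) * f i (Q i) + (1/2 : ℝ) * f i (P (Sum.inl i))))
      = ∑ i, f i (P (Sum.inl i)) := by
    rw [Finset.sum_add_distrib, ← Finset.mul_sum, ← Finset.mul_sum, hEq]; ring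
  have hPM := hopt M hMfeas
  linarith
end

section
/- (Core of Lemma 2.) Let I be a finite nonempty index set with a symmetric adjacency relation N, each f_i : ℝ → ℝ differentiable, z antisymmetric on adjacent pairs (z_{ij} = −z_{ji}), and D_i, τ_i real with D_i + τ_i > 0 for all i. Suppose there is ω₀ ∈ ℝ such that for every i ∈ I: (i) ω₀ + f_i'(P_i) + μ_i − γ_i⁻ + γ_i⁺ = 0, and (ii) −Σ_{j∈N_i}(μ_i − μ_j) − Σ_{j∈N_i} z_{ij} + D_i ω₀ + τ_i·(−μ_i − f_i'(P_i) + γ_i⁻ − γ_i⁺) = 0. Then ω₀ = 0. -/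
open Finset in
lemma sum_antisym_aux {I : Type*} [Fintype I]
    (adj : I → I → Prop) [DecidableRel adj]
    (hsym : ∀ i j, adj i j ↔ adj j i)
    (g : I → I → ℝ) (hg : ∀ i j, adj i j → g i j = - g j i) :
    ∑ i, ∑ j ∈ univ.filter (fun j => adj i j), g i j = 0 := by
  have key : ∑ i, ∑ j ∈ univ.filter (fun j => adj i j), g i j
      = ∑ i, ∑ j, if adj i j then g i j else 0 := by
    simp [Finset.sum_filter]
  have h3 : ∀ i j : I, (if adj j i then g j i else 0) = - (if adj i j then g i j else 0) := by
    intro i j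
    by_cases h : adj i j
    · have h' : adj j i := (hsym i j).mp h
      simp [h, h', hg j i h']
    · have h' : ¬ adj j i := fun hh => h ((hsym j i).mp hh)
      simp [h, h']
  have hcomm : (∑ i, ∑ j, if adj i j then g i j else 0)
      = ∑ i, ∑ j, if adj j i then g j i else 0 := Finset.sum_comm
  have hneg : (∑ i, ∑ j, if adj j i then g j i else 0)
      = ∑ i, ∑ j, -(if adj i j then g i j else 0) :=
    Finset.sum_congr rfl fun i _ => Finset.sum_congr rfl fun j _ => h3 i j
  have : (∑ i, ∑ j, if adj i j then g i j else 0)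
      = - ∑ i, ∑ j, if adj i j then g i j else 0 :=
    calc (∑ i, ∑ j, if adj i j then g i j else 0)
        = ∑ i, ∑ j, -(if adj i j then g i j else 0) := hcomm.trans hneg
      _ = - ∑ i, ∑ j, if adj i j then g i j else 0 := by
          simp only [Finset.sum_neg_distrib]
  rw [key]
  linarith
open Finset in
/-- **Core of Lemma 2.** At any equilibrium of the frequency-measurement-based
estimator together with the generator control law, the common frequency
deviation `ω₀` is zero. -/
theorem freq_measurement_equilibrium_zero {I : Type*} [Fintype I] [Nonempty I]
    (adj : I → I → Prop) [DecidableRel adj]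
    (hsym : ∀ i j, adj i j ↔ adj j i) (hirr : ∀ i, ¬ adj i i)
    (f : I → ℝ → ℝ) (hdiff : ∀ i, Differentiable ℝ (f i))
    (z : I → I → ℝ) (hz : ∀ i j, adj i j → z i j = - z j i)
    (D τ : I → ℝ) (hDτ : ∀ i, 0 < D i + τ i)
    (P μ γm γp : I → ℝ) (ω₀ : ℝ)
    (h1 : ∀ i, ω₀ + deriv (f i) (P i) + μ i - γm i + γp i = 0)
    (h2 : ∀ i, -(∑ j ∈ univ.filter (fun j => adj i j), (μ i - μ j))
          - (∑ j ∈ univ.filter (fun j => adj i j), z i j)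
          + D i * ω₀
          + τ i * (-(μ i) - deriv (f i) (P i) + γm i - γp i) = 0) :
    ω₀ = 0 := by
  have h4 : ∀ i, -(∑ j ∈ univ.filter (fun j => adj i j), (μ i - μ j))
      - (∑ j ∈ univ.filter (fun j => adj i j), z i j)
      + (D i + τ i) * ω₀ = 0 := by
    intro i
    have e2 := h2 i
    have e3 : -μ i - deriv (f i) (P i) + γm i - γp i = ω₀ := by linarith [h1 i]
    rw [e3] at e2
    linear_combination e2
  have hA : ∑ i, ∑ j ∈ univ.filter (fun j => adj i j), (μ i - μ j) = 0 := by
    apply sum_antisym_aux adj hsym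
    intro i j _; ring
  have hB : ∑ i, ∑ j ∈ univ.filter (fun j => adj i j), z i j = 0 :=
    sum_antisym_aux adj hsym z hz
  have hsum : ∑ i, (-(∑ j ∈ univ.filter (fun j => adj i j), (μ i - μ j))
      - (∑ j ∈ univ.filter (fun j => adj i j), z i j)
      + (D i + τ i) * ω₀) = 0 := by
    exact Finset.sum_eq_zero (fun i _ => h4 i)
  rw [Finset.sum_add_distrib, Finset.sum_sub_distrib, ← Finset.sum_mul,
    Finset.sum_neg_distrib, hA, hB] at hsum
  simp only [neg_zero, zero_sub, neg_zero, zero_add] at hsum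
  have hpos : 0 < ∑ i, (D i + τ i) := Finset.sum_pos (fun i _ => hDτ i) Finset.univ_nonempty
  have : (∑ i, (D i + τ i)) * ω₀ = 0 := by linarith
  exact (mul_eq_zero.mp this).resolve_left (ne_of_gt hpos) |> id
end

section
/- Let L : ℝⁿ × ℝᵐ → ℝ be differentiable, such that x₁ ↦ L(x₁, x₂) is convex for every fixed x₂ and x₂ ↦ L(x₁, x₂) is concave for every fixed x₁, and let (x₁*, x₂*) be a saddle point of L, i.e. L(x₁*, x₂) ≤ L(x₁*, x₂*) ≤ L(x₁, x₂*) for all x₁ ∈ ℝⁿ, x₂ ∈ ℝᵐ. Then for every (x₁, x₂) ∈ ℝⁿ × ℝᵐ, −(x₁ − x₁*)·∇_{x₁}L(x₁, x₂) + (x₂ − x₂*)·∇_{x₂}L(x₁, x₂) ≤ 0. -/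
/-- Gradient inequality for convex functions: `⟨g, y - x⟩ ≤ f y - f x`. -/
lemma convexOn_inner_grad_le {E : Type*} [NormedAddCommGroup E] [InnerProductSpace ℝ E] [CompleteSpace E]
    (f : E → ℝ) (hconv : ConvexOn ℝ Set.univ f) {x g : E}
    (hg : HasGradientAt f g x) (y : E) : (inner ℝ g (y - x) : ℝ) ≤ f y - f x := by
  have hline : HasDerivAt (fun t : ℝ => x + t • (y - x)) (y - x) 0 := by
    simpa using ((hasDerivAt_id (0 : ℝ)).smul_const (y - x)).const_add x
  have hF := hasGradientAt_iff_hasFDerivAt.mp hg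
  have hx0 : x + (0 : ℝ) • (y - x) = x := by simp
  rw [← hx0] at hF
  have hd : HasDerivAt (fun t : ℝ => f (x + t • (y - x))) ((inner ℝ g (y - x) : ℝ)) 0 := by
    have h := hF.comp_hasDerivAt 0 hline
    simp only [InnerProductSpace.toDual_apply_apply] at h
    exact h
  have hgc : ConvexOn ℝ Set.univ (fun t : ℝ => f (x + t • (y - x))) := by
    have h := hconv.comp_affineMap (AffineMap.lineMap x y)
    simp only [Set.preimage_univ] at h
    have heq : (f ∘ ⇑(AffineMap.lineMap x y)) = fun t : ℝ => f (x + t • (y - x)) := by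
      funext t
      simp [Function.comp, AffineMap.lineMap_apply, add_comm]
    rwa [heq] at h
  have := hgc.le_slope_of_hasDerivAt (Set.mem_univ (0 : ℝ)) (Set.mem_univ (1 : ℝ))
    zero_lt_one hd
  simpa [slope_def_field] using this

/-- For a differentiable convex–concave function `L` with saddle point
`(x₁s, x₂s)`, the primal–dual dissipation inequality
`-(x₁ - x₁s)·∇_{x₁}L(x₁,x₂) + (x₂ - x₂s)·∇_{x₂}L(x₁,x₂) ≤ 0` holds everywhere. -/
theorem saddle_point_dissipation {n m : ℕ}
    (L : EuclideanSpace ℝ (Fin n) → EuclideanSpace ℝ (Fin m) → ℝ)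
    (hdiff : Differentiable ℝ
      (fun q : EuclideanSpace ℝ (Fin n) × EuclideanSpace ℝ (Fin m) => L q.1 q.2))
    (hconv : ∀ x₂, ConvexOn ℝ Set.univ (fun x₁ => L x₁ x₂))
    (hconc : ∀ x₁, ConcaveOn ℝ Set.univ (fun x₂ => L x₁ x₂))
    (x₁s : EuclideanSpace ℝ (Fin n)) (x₂s : EuclideanSpace ℝ (Fin m))
    (hsaddle : ∀ x₁ x₂, L x₁s x₂ ≤ L x₁s x₂s ∧ L x₁s x₂s ≤ L x₁ x₂s) :
    ∀ (x₁ : EuclideanSpace ℝ (Fin n)) (x₂ : EuclideanSpace ℝ (Fin m)),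
      -(inner ℝ (x₁ - x₁s) (gradient (fun y => L y x₂) x₁) : ℝ)
        + (inner ℝ (x₂ - x₂s) (gradient (fun y => L x₁ y) x₂) : ℝ) ≤ 0 := by
  intro x₁ x₂
  -- differentiability of the partial maps
  have hd1 : DifferentiableAt ℝ (fun y => L y x₂) x₁ :=
    (hdiff (x₁, x₂)).comp (f := fun y => (y, x₂)) x₁ (differentiableAt_id.prodMk (differentiableAt_const _))
  have hd2 : DifferentiableAt ℝ (fun y => L x₁ y) x₂ :=
    (hdiff (x₁, x₂)).comp (f := fun y => (x₁, y)) x₂ ((differentiableAt_const _).prodMk differentiableAt_id)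
  -- convex side
  have h1 : (inner ℝ (gradient (fun y => L y x₂) x₁) (x₁s - x₁) : ℝ)
      ≤ L x₁s x₂ - L x₁ x₂ :=
    convexOn_inner_grad_le _ (hconv x₂) hd1.hasGradientAt x₁s
  -- concave side: apply the convex lemma to the negated partial map
  have hneg : HasGradientAt (fun y => -L x₁ y) (-(gradient (fun y => L x₁ y) x₂)) x₂ := by
    rw [hasGradientAt_iff_hasFDerivAt, map_neg]
    exact (hasGradientAt_iff_hasFDerivAt.mp hd2.hasGradientAt).neg
  have h2 : (inner ℝ (-(gradient (fun y => L x₁ y) x₂)) (x₂s - x₂) : ℝ)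
      ≤ -L x₁ x₂s - -L x₁ x₂ :=
    convexOn_inner_grad_le _ (hconc x₁).neg hneg x₂s
  have hs1 := (hsaddle x₁ x₂).1
  have hs2 := (hsaddle x₁ x₂).2
  have hs3 := (hsaddle x₁ x₂s).2
  have hs4 := (hsaddle x₁s x₂).1
  -- rewrite the goal's inner products
  have e1 : -(inner ℝ (x₁ - x₁s) (gradient (fun y => L y x₂) x₁) : ℝ)
      = (inner ℝ (gradient (fun y => L y x₂) x₁) (x₁s - x₁) : ℝ) := by
    rw [real_inner_comm, ← inner_neg_right, neg_sub]
  have e2 : (inner ℝ (x₂ - x₂s) (gradient (fun y => L x₁ y) x₂) : ℝ)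
      = (inner ℝ (-(gradient (fun y => L x₁ y) x₂)) (x₂s - x₂) : ℝ) := by
    rw [inner_neg_left, ← inner_neg_right, neg_sub, real_inner_comm]
  rw [e1, e2]
  linarith
end

section
/- (The excitation controller satisfies condition C2.) Let k_E > 0, let E_q : ℝ → ℝ be a function and E_q*, E_f* real constants, and let E_f : ℝ → ℝ be differentiable with E_f'(t) = −(E_f(t) − E_f*) − k_E (E_q(t) − E_q*) for all t. Then the storage function S(t) = (1/(2 k_E))(E_f(t) − E_f*)² satisfies, for all t, S'(t) = (−E_q(t) − (−E_q*))·(E_f(t) − E_f*) − (1/k_E)(E_f(t) − E_f*)²; in particular S'(t) ≤ (−E_q(t) − (−E_q*))·(E_f(t) − E_f*) − φ(t) with positive definite dissipation φ(t) = (1/k_E)(E_f(t) − E_f*)², so the excitation dynamics are strictly incrementally output passive with input −E_q and output E_f. -/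
/-- **The excitation controller satisfies condition C2.**
Under the excitation controller `E_f' = -(E_f - E_f*) - k_E (E_q - E_q*)`,
the storage function `S(t) = (1/(2 k_E)) (E_f t - E_fs)²` satisfies
`S'(t) = (-(E_q t) - (-E_qs)) * (E_f t - E_fs) - (1/k_E) (E_f t - E_fs)²`,
hence strict incremental output passivity with input `-E_q` and output `E_f`. -/
theorem excitation_control_C2 (kE : ℝ) (hk : 0 < kE) (Eq : ℝ → ℝ) (Eqs Efs : ℝ)
    (Ef : ℝ → ℝ) (hEf : Differentiable ℝ Ef)
    (hdyn : ∀ t, deriv Ef t = -(Ef t - Efs) - kE * (Eq t - Eqs)) :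
    ∀ t, deriv (fun s => (1/(2*kE)) * (Ef s - Efs)^2) t
        = (-(Eq t) - (-Eqs)) * (Ef t - Efs) - (1/kE) * (Ef t - Efs)^2 ∧
      deriv (fun s => (1/(2*kE)) * (Ef s - Efs)^2) t
        ≤ (-(Eq t) - (-Eqs)) * (Ef t - Efs) - (1/kE) * (Ef t - Efs)^2 := by
  intro t
  have hd : HasDerivAt Ef (deriv Ef t) t := (hEf t).hasDerivAt
  have h1 : HasDerivAt (fun s => (1/(2*kE)) * (Ef s - Efs)^2)
      ((1/(2*kE)) * (2 * (Ef t - Efs) * deriv Ef t)) t := by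
    exact (((hd.sub_const Efs).pow 2).const_mul _).congr_deriv (by ring)
  have heq : deriv (fun s => (1/(2*kE)) * (Ef s - Efs)^2) t
      = (-(Eq t) - (-Eqs)) * (Ef t - Efs) - (1/kE) * (Ef t - Efs)^2 := by
    rw [h1.deriv, hdyn t]
    field_simp
    ring
  exact ⟨heq, le_of_eq heq⟩
end

section
/- Let D > 0, c > 0, τ > 0 and β be real numbers, and let M be the symmetric 3×3 real matrix M = [[−D, 0, −β/2], [0, −c, −τc/2], [−β/2, −τc/2, −τ]]. Then M is negative definite (i.e. xᵀMx < 0 for every nonzero x ∈ ℝ³) if and only if β² < τ·D·(4 − τ·c). -/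
open Matrix in
/-- The Schur-complement computation in the stability proof of the
frequency-measurement-based controller: the symmetric matrix
`M = [[-D, 0, -β/2], [0, -c, -τc/2], [-β/2, -τc/2, -τ]]` is negative definite
iff `β² < τ·D·(4 - τ·c)`. -/
theorem schur_negative_definite_iff (D c τ β : ℝ)
    (hD : 0 < D) (hc : 0 < c) (hτ : 0 < τ) :
    (∀ x : Fin 3 → ℝ, x ≠ 0 →
        x ⬝ᵥ ((!![-D, 0, -β/2; 0, -c, -τ*c/2; -β/2, -τ*c/2, -τ] :
          Matrix (Fin 3) (Fin 3) ℝ) *ᵥ x) < 0) ↔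
      β^2 < τ * D * (4 - τ * c) := by
  have key : ∀ x : Fin 3 → ℝ,
      x ⬝ᵥ ((!![-D, 0, -β/2; 0, -c, -τ*c/2; -β/2, -τ*c/2, -τ] :
        Matrix (Fin 3) (Fin 3) ℝ) *ᵥ x)
      = -D * (x 0)^2 - c * (x 1)^2 - τ * (x 2)^2 - β * (x 0) * (x 2)
        - τ * c * (x 1) * (x 2) := by
    intro x
    simp [dotProduct, Matrix.mulVec, Fin.sum_univ_three]
    ring
  constructor
  · intro h
    have hx : (![-2*β, -2*τ*D, 4*D] : Fin 3 → ℝ) ≠ 0 := by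
      intro hcon
      have := congrFun hcon 2
      simp at this
      linarith
    have := h _ hx
    rw [key] at this
    simp only [Matrix.cons_val_zero, Matrix.cons_val_one, Matrix.head_cons,
      Matrix.cons_val_two, Matrix.tail_cons] at this
    nlinarith [this, hD]
  · intro hβ x hx
    rw [key]
    obtain ⟨i, hi⟩ := Function.ne_iff.mp hx
    simp only [Pi.zero_apply] at hi
    have hsum : 0 < (x 0)^2 + (x 1)^2 + (x 2)^2 := by
      fin_cases i <;> simp at hi <;> positivity
    rcases eq_or_ne (x 2) 0 with h2 | h2
    · have h01 : x 0 ≠ 0 ∨ x 1 ≠ 0 := by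
        by_contra hcon
        push_neg at hcon
        rw [hcon.1, hcon.2, h2] at hsum
        simp at hsum
      rcases h01 with h0 | h1
      · have h0' : 0 < (x 0)^2 := by positivity
        rw [h2]
        nlinarith [mul_nonneg hc.le (sq_nonneg (x 1)), mul_pos hD h0']
      · have h1' : 0 < (x 1)^2 := by positivity
        rw [h2]
        nlinarith [mul_nonneg hD.le (sq_nonneg (x 0)), mul_pos hc h1']
    · have hsq : 0 < (x 2)^2 := by positivity
      nlinarith [sq_nonneg (2*D*(x 0) + β*(x 2)),
        mul_nonneg (mul_pos hD hc).le (sq_nonneg (2*(x 1) + τ*(x 2))),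
        mul_pos (sub_pos.mpr hβ) hsq]
end
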